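/- For the operator A(x,y(λ)) = (-cx, -λ y(λ)) on E = ℝ × L¹(μ), every α > 0 lies in the resolvent set of A, the resolvent is given by R(α,A)(x, y(λ)) = (x/(α+c), y(λ)/(α+λ)), and its operator norm satisfies ‖R(α,A)‖ ≤ 1/α. -/
import Mathlib


open MeasureTheory Real Filter

/-- The norm of `E = ℝ × L¹(μ)` at the level of representatives. -/
noncomputable def Enorm (μ : Measure ℝ) (z : ℝ × (ℝ → ℝ)) : ℝ :=
  |z.1| + ∫ l, |z.2 l| ∂μ

/-- The operator `A(x, y(λ)) = (-c x, -λ y(λ))`, `c = μ((0,∞))`. -/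
noncomputable def Agen (μ : Measure ℝ) (z : ℝ × (ℝ → ℝ)) : ℝ × (ℝ → ℝ) :=
  (-(μ Set.univ).toReal * z.1, fun l => -l * z.2 l)

/-- The candidate resolvent `R(α,A)(x, y(λ)) = (x/(α+c), y(λ)/(α+λ))`. -/
noncomputable def Resv (μ : Measure ℝ) (α : ℝ) (z : ℝ × (ℝ → ℝ)) : ℝ × (ℝ → ℝ) :=
  (z.1 / (α + (μ Set.univ).toReal), fun l => z.2 l / (α + l))

/-- For `A(x,y(λ)) = (-cx, -λy(λ))` on `E = ℝ × L¹(μ)`, every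
`α > 0` lies in the resolvent set of `A`: `R(α,A)(x,y(λ)) = (x/(α+c), y(λ)/(α+λ))`
maps `E` into `D(A)`, is a two-sided inverse of `α - A` (in the norm of `E`), and
satisfies `‖R(α,A)‖ ≤ 1/α`. -/
theorem seedbank_resolvent
    (μ : Measure ℝ) [IsFiniteMeasure μ] (hsupp : μ (Set.Iic 0) = 0)
    (α : ℝ) (hα : 0 < α) :
    (∀ z : ℝ × (ℝ → ℝ), Integrable z.2 μ →
      Integrable ((Resv μ α z).2) μ ∧
      Integrable (fun l => l * (Resv μ α z).2 l) μ ∧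
      Enorm μ ((α • Resv μ α z - Agen μ (Resv μ α z)) - z) = 0 ∧
      Enorm μ (Resv μ α z) ≤ Enorm μ z / α) ∧
    (∀ z : ℝ × (ℝ → ℝ), Integrable z.2 μ → Integrable (fun l => l * z.2 l) μ →
      Enorm μ (Resv μ α (α • z - Agen μ z) - z) = 0) := by
  have hc0 : 0 ≤ (μ Set.univ).toReal := ENNReal.toReal_nonneg
  have hαc : 0 < α + (μ Set.univ).toReal := by linarith
  have hpos : ∀ᵐ l ∂μ, 0 < l := by
    have h := measure_eq_zero_iff_ae_notMem.mp hsupp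
    filter_upwards [h] with l hl
    simpa [Set.mem_Iic, not_le] using hl
  have hmeasden : AEStronglyMeasurable (fun l : ℝ => α + l) μ :=
    (measurable_const.add measurable_id).aestronglyMeasurable
  constructor
  · rintro ⟨x, y⟩ hy
    simp only at hy
    have hmeas : AEStronglyMeasurable (fun l => y l / (α + l)) μ :=
      (hy.aemeasurable.div
        ((measurable_const.add measurable_id).aemeasurable)).aestronglyMeasurable
    have hR2 : Integrable (fun l => y l / (α + l)) μ := by
      refine Integrable.mono (hy.div_const α) hmeas ?_
      filter_upwards [hpos] with l hl
      have h1 : 0 < α + l := by linarith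
      rw [norm_div, norm_div, Real.norm_eq_abs, Real.norm_eq_abs,
        abs_of_pos h1, Real.norm_eq_abs, abs_of_pos hα]
      exact div_le_div_of_nonneg_left (abs_nonneg _) hα (by linarith)
    have hlR2 : Integrable (fun l => l * (y l / (α + l))) μ := by
      refine Integrable.mono hy (aestronglyMeasurable_id.mul hmeas) ?_
      filter_upwards [hpos] with l hl
      have h1 : 0 < α + l := by linarith
      rw [Real.norm_eq_abs, Real.norm_eq_abs, abs_mul, abs_div, abs_of_pos hl,
        abs_of_pos h1]
      rw [mul_div_assoc', mul_comm, mul_div_assoc]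
      calc |y l| * (l / (α + l)) ≤ |y l| * 1 := by
            refine mul_le_mul_of_nonneg_left ?_ (abs_nonneg _)
            rw [div_le_one h1]; linarith
        _ = |y l| := mul_one _
    refine ⟨hR2, hlR2, ?_, ?_⟩
    · -- (α R - A R) - z = 0
      have h1 : α * (x / (α + (μ Set.univ).toReal)) -
          -(μ Set.univ).toReal * (x / (α + (μ Set.univ).toReal)) - x = 0 := by
        field_simp
        ring
      have h2 : ∀ᵐ l ∂μ,
          |α * (y l / (α + l)) - -l * (y l / (α + l)) - y l| = 0 := by
        filter_upwards [hpos] with l hl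
        have h1' : α + l ≠ 0 := by positivity
        rw [abs_eq_zero]
        field_simp
        ring
      simp only [Enorm, Resv, Agen, Prod.fst_sub, Prod.snd_sub, Prod.smul_fst,
        Prod.smul_snd, Pi.sub_apply, Pi.smul_apply, smul_eq_mul]
      rw [h1, integral_congr_ae h2]
      simp
    · -- norm bound
      simp only [Enorm, Resv]
      have hb1 : |x / (α + (μ Set.univ).toReal)| ≤ |x| / α := by
        rw [abs_div, abs_of_pos hαc]
        exact div_le_div_of_nonneg_left (abs_nonneg _) hα (by linarith)
      have hb2 : ∫ l, |y l / (α + l)| ∂μ ≤ (∫ l, |y l| ∂μ) / α := by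
        rw [div_eq_mul_inv, ← integral_mul_const]
        refine integral_mono_ae hR2.abs (hy.abs.mul_const _) ?_
        filter_upwards [hpos] with l hl
        have h1 : 0 < α + l := by linarith
        rw [abs_div, abs_of_pos h1, div_eq_mul_inv]
        refine mul_le_mul_of_nonneg_left ?_ (abs_nonneg _)
        exact inv_anti₀ hα (by linarith)
      calc |x / (α + (μ Set.univ).toReal)| + ∫ l, |y l / (α + l)| ∂μ
          ≤ |x| / α + (∫ l, |y l| ∂μ) / α := add_le_add hb1 hb2
        _ = (|x| + ∫ l, |y l| ∂μ) / α := by ring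
  · rintro ⟨x, y⟩ hy hly
    have h1 : (α * x - -(μ Set.univ).toReal * x) / (α + (μ Set.univ).toReal)
        - x = 0 := by
      field_simp
      ring
    have h2 : ∀ᵐ l ∂μ,
        |(α * y l - -l * y l) / (α + l) - y l| = 0 := by
      filter_upwards [hpos] with l hl
      have h1' : α + l ≠ 0 := by positivity
      rw [abs_eq_zero]
      field_simp
      ring
    simp only [Enorm, Resv, Agen, Prod.fst_sub, Prod.snd_sub, Prod.smul_fst,
      Prod.smul_snd, Pi.sub_apply, Pi.smul_apply, smul_eq_mul]
    rw [h1, integral_congr_ae h2]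
    simp
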